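/- Let t = 2r with r ≥ 1 be fixed, and for q ≥ t+1 define f_k(q) = C(q+1, k-1)*C(q, t-k+1) for k in [1, t+1], α_k = 2(k-1) for k in [1, r] and α_k = t for k in [r+1, t+1]. Then the limit as q → ∞ of (Σ_{k=1}^{t+1} α_k f_k(q)) / (t * Σ_{k=1}^{t+1} f_k(q)) equals 1 - (1/2) * C(t, r) / 2^t. -/

import Mathlib

open Filter Finset

private lemma keyNat (s : ℕ) :
    2 * (∑ j ∈ range (2*s+3), (if j < s+1 then 2*j else 2*(s+1)) * (2*(s+1)).choose j)
      + (2*(s+1)) * (2*(s+1)).choose (s+1) = 2*(2*(s+1)) * 2^(2*(s+1)) := by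
  set a := ∑ i ∈ range s, (2*s+1).choose i with ha
  set b := (2*s+1).choose s with hb
  have hab : a + b = 4 ^ s := by
    have := Nat.sum_range_choose_halfway s
    rwa [Finset.sum_range_succ] at this
  have hT1 : ∑ j ∈ range (s+1), j * (2*(s+1)).choose j = (2*(s+1)) * a := by
    rw [Finset.sum_range_succ']
    simp only [Nat.zero_eq, zero_mul, add_zero]
    rw [Finset.mul_sum]
    refine Finset.sum_congr rfl fun i _ => ?_
    have h := Nat.add_one_mul_choose_eq (2*s+1) i
    have : 2*s+1+1 = 2*(s+1) := by omega
    rw [this] at h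
    calc (i+1) * (2*(s+1)).choose (i+1) = (2*(s+1)).choose (i+1) * (i+1) := by ring
      _ = (2*(s+1)) * (2*s+1).choose i := by rw [← h]
  have htail : ∑ i ∈ range s, (2*s+1).choose (i+1) + 1 = a + b := by
    have := Finset.sum_range_succ' (fun i => (2*s+1).choose i) s
    rw [Finset.sum_range_succ] at this
    simpa [Nat.choose_zero_right] using this.symm
  have hu : ∑ j ∈ range (s+1), (2*(s+1)).choose j = 2*a + b := by
    rw [Finset.sum_range_succ']
    have hp : ∀ i, (2*(s+1)).choose (i+1) = (2*s+1).choose i + (2*s+1).choose (i+1) := by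
      intro i
      have : 2*(s+1) = (2*s+1)+1 := by omega
      rw [this, Nat.choose_succ_succ]
    simp only [hp, Finset.sum_add_distrib, Nat.choose_zero_right]
    omega
  have hcb : (2*(s+1)).choose (s+1) = 2 * b := by
    have h1 : 2*(s+1) = (2*s+1)+1 := by omega
    rw [h1, Nat.choose_succ_succ]
    simp only [Nat.succ_eq_add_one]
    have h2 : (2*s+1).choose (s+1) = (2*s+1).choose s := by
      have h3 := Nat.choose_symm (show s+1 ≤ 2*s+1 by omega)
      rw [show 2*s+1-(s+1) = s by omega] at h3
      exact h3.symm
    omega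
  have huv : ∑ j ∈ range (s+1), (2*(s+1)).choose j + ∑ j ∈ Ico (s+1) (2*s+3), (2*(s+1)).choose j
      = 2 ^ (2*(s+1)) := by
    rw [Finset.sum_range_add_sum_Ico _ (by omega)]
    have : 2*s+3 = (2*(s+1))+1 := by omega
    rw [this, Nat.sum_range_choose]
  have hsplit : ∑ j ∈ range (2*s+3), (if j < s+1 then 2*j else 2*(s+1)) * (2*(s+1)).choose j
      = 2 * ((2*(s+1)) * a) + (2*(s+1)) * ∑ j ∈ Ico (s+1) (2*s+3), (2*(s+1)).choose j := by
    rw [← Finset.sum_range_add_sum_Ico _ (show s+1 ≤ 2*s+3 by omega)]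
    congr 1
    · rw [← hT1, Finset.mul_sum]
      refine Finset.sum_congr rfl fun j hj => ?_
      rw [Finset.mem_range] at hj
      rw [if_pos hj]; ring
    · rw [Finset.mul_sum]
      refine Finset.sum_congr rfl fun j hj => ?_
      rw [Finset.mem_Ico] at hj
      rw [if_neg (by omega)]
  rw [hsplit, hcb]
  set v := ∑ j ∈ Ico (s+1) (2*s+3), (2*(s+1)).choose j
  rw [hu] at huv
  nlinarith [huv]

private lemma tendsto_choose_div (m : ℕ) :
    Tendsto (fun q : ℕ => (q.choose m : ℝ) / (q : ℝ) ^ m) atTop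
      (nhds (1 / (m.factorial : ℝ))) := by
  induction m with
  | zero => simpa using tendsto_const_nhds
  | succ m ih =>
    have hq : Tendsto (fun q : ℕ => ((q : ℝ) - m) / q) atTop (nhds 1) := by
      have h1 : Tendsto (fun q : ℕ => (m : ℝ) / q) atTop (nhds 0) :=
        tendsto_const_nhds.div_atTop tendsto_natCast_atTop_atTop
      have h2 : Tendsto (fun q : ℕ => 1 - (m : ℝ) / q) atTop (nhds (1 - 0)) :=
        tendsto_const_nhds.sub h1
      rw [sub_zero] at h2
      refine h2.congr' ?_
      filter_upwards [eventually_gt_atTop 0] with q hq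
      have : (q : ℝ) ≠ 0 := by positivity
      field_simp
    have h := (ih.mul hq).div_const ((m : ℝ) + 1)
    have hval : 1 / (m.factorial : ℝ) * 1 / ((m : ℝ) + 1) = 1 / ((m+1).factorial : ℝ) := by
      rw [Nat.factorial_succ]
      push_cast
      field_simp
    rw [hval] at h
    refine h.congr' ?_
    filter_upwards [eventually_ge_atTop (m + 1)] with q hq
    have hq0 : (q : ℝ) ≠ 0 := Nat.cast_ne_zero.mpr (by omega)
    have hcs := Nat.choose_succ_right_eq q m
    have hcast : ((q.choose (m+1) : ℕ) : ℝ) * ((m : ℝ) + 1) = (q.choose m : ℝ) * ((q : ℝ) - m) := by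
      have := congrArg (fun n : ℕ => (n : ℝ)) hcs
      push_cast at this
      rw [Nat.cast_sub (by omega)] at this
      linarith [this]
    have hm1 : ((m : ℝ) + 1) ≠ 0 := by positivity
    field_simp
    rw [pow_succ]
    ring_nf
    ring_nf at hcast
    linear_combination (-((q:ℝ)^m * (q:ℝ))) * hcast

private lemma tendsto_choose_succ_div (m : ℕ) :
    Tendsto (fun q : ℕ => ((q+1).choose m : ℝ) / (q : ℝ) ^ m) atTop
      (nhds (1 / (m.factorial : ℝ))) := by
  have h1 : Tendsto (fun q : ℕ => ((q+1).choose m : ℝ) / ((q:ℝ)+1) ^ m) atTop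
      (nhds (1 / (m.factorial : ℝ))) := by
    have := (tendsto_choose_div m).comp (Filter.tendsto_add_atTop_nat 1)
    refine this.congr fun q => ?_
    simp only [Function.comp]
    push_cast
    ring_nf
  have h2 : Tendsto (fun q : ℕ => (((q:ℝ)+1) / q) ^ m) atTop (nhds 1) := by
    have hb : Tendsto (fun q : ℕ => ((q:ℝ)+1) / q) atTop (nhds 1) := by
      have hz : Tendsto (fun q : ℕ => 1 + 1/(q:ℝ)) atTop (nhds (1 + 0)) :=
        tendsto_const_nhds.add (tendsto_const_nhds.div_atTop tendsto_natCast_atTop_atTop)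
      rw [add_zero] at hz
      refine hz.congr' ?_
      filter_upwards [eventually_gt_atTop 0] with q hq
      have : (q:ℝ) ≠ 0 := Nat.cast_ne_zero.mpr (by omega)
      field_simp
    simpa using hb.pow m
  have h := h1.mul h2
  rw [mul_one] at h
  refine h.congr' ?_
  filter_upwards [eventually_gt_atTop 0] with q hq
  have hq0 : (q:ℝ) ≠ 0 := Nat.cast_ne_zero.mpr (by omega)
  have hq1 : ((q:ℝ)+1) ≠ 0 := by positivity
  rw [div_pow]
  field_simp

private lemma tendsto_term (t k : ℕ) (hk1 : 1 ≤ k) (hk2 : k ≤ t + 1) :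
    Tendsto (fun q : ℕ => (((q+1).choose (k-1) * q.choose (t+1-k) : ℕ) : ℝ) / (q:ℝ)^t)
      atTop (nhds ((t.choose (k-1) : ℝ) / (t.factorial : ℝ))) := by
  have h := (tendsto_choose_succ_div (k-1)).mul (tendsto_choose_div (t+1-k))
  have hval : 1 / ((k-1).factorial : ℝ) * (1 / ((t+1-k).factorial : ℝ))
      = (t.choose (k-1) : ℝ) / (t.factorial : ℝ) := by
    have hle : k - 1 ≤ t := by omega
    have hfac := Nat.choose_mul_factorial_mul_factorial hle
    rw [show t - (k-1) = t+1-k by omega] at hfac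
    have hfacR : (t.choose (k-1) : ℝ) * ((k-1).factorial : ℝ) * ((t+1-k).factorial : ℝ)
        = (t.factorial : ℝ) := by exact_mod_cast congrArg (fun n : ℕ => (n:ℝ)) hfac
    have h1 : ((k-1).factorial : ℝ) ≠ 0 := by positivity
    have h2 : ((t+1-k).factorial : ℝ) ≠ 0 := by positivity
    have h3 : (t.factorial : ℝ) ≠ 0 := by positivity
    field_simp
    linear_combination -hfacR
  rw [hval] at h
  refine h.congr' ?_
  filter_upwards [eventually_gt_atTop 0] with q hq
  have hq0 : (q:ℝ) ≠ 0 := Nat.cast_ne_zero.mpr (by omega)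
  have hpow : (q:ℝ)^t = (q:ℝ)^(k-1) * (q:ℝ)^(t+1-k) := by
    rw [← pow_add]
    congr 1
    omega
  push_cast
  rw [hpow]
  field_simp

private lemma div_div_cancel_aux (a b c : ℝ) (hc : c ≠ 0) : (a/c)/(b/c) = a/b := by
  rcases eq_or_ne b 0 with rfl | hb
  · simp
  · field_simp

theorem stmt_11 (t r : ℕ) (hr : 1 ≤ r) (ht : t = 2 * r)
    (α : ℕ → ℕ) (hα : ∀ k, α k = if k ≤ r then 2 * (k - 1) else t) :
    Filter.Tendsto
      (fun q : ℕ =>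
        (∑ k ∈ Finset.Icc 1 (t + 1),
            (α k : ℝ) * ((Nat.choose (q + 1) (k - 1) * Nat.choose q (t + 1 - k) : ℕ) : ℝ)) /
          ((t : ℝ) * ∑ k ∈ Finset.Icc 1 (t + 1),
            ((Nat.choose (q + 1) (k - 1) * Nat.choose q (t + 1 - k) : ℕ) : ℝ)))
      Filter.atTop
      (nhds (1 - (1 / 2) * (Nat.choose t r : ℝ) / 2 ^ t)) := by
  obtain ⟨s, rfl⟩ : ∃ s, r = s + 1 := ⟨r - 1, by omega⟩
  subst ht
  set r := s + 1 with hrdef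
  set t := 2 * r with ht
  set S : ℕ := ∑ j ∈ range (t+1), (if j < r then 2*j else 2*r) * t.choose j with hS
  -- numerator limit
  have hnum : Tendsto (fun q : ℕ =>
      ∑ k ∈ Icc 1 (t+1),
        (α k : ℝ) * ((((q+1).choose (k-1) * q.choose (t+1-k) : ℕ)) : ℝ) / (q:ℝ)^t)
      atTop (nhds (∑ k ∈ Icc 1 (t+1),
        (α k : ℝ) * ((t.choose (k-1) : ℝ) / (t.factorial : ℝ)))) := by
    refine tendsto_finset_sum _ fun k hk => ?_
    rw [mem_Icc] at hk
    have h := (tendsto_const_nhds (x := (α k : ℝ))).mul (tendsto_term t k hk.1 hk.2)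
    refine h.congr fun q => ?_
    rw [mul_div_assoc]
  have hden : Tendsto (fun q : ℕ =>
      ∑ k ∈ Icc 1 (t+1), ((((q+1).choose (k-1) * q.choose (t+1-k) : ℕ)) : ℝ) / (q:ℝ)^t)
      atTop (nhds (∑ k ∈ Icc 1 (t+1), (t.choose (k-1) : ℝ) / (t.factorial : ℝ))) :=
    tendsto_finset_sum _ fun k hk => by
      rw [mem_Icc] at hk; exact tendsto_term t k hk.1 hk.2
  -- identify the limits
  have hA : ∑ k ∈ Icc 1 (t+1), (α k : ℝ) * ((t.choose (k-1) : ℝ) / (t.factorial : ℝ))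
      = (S : ℝ) / (t.factorial : ℝ) := by
    rw [← Finset.Ico_add_one_right_eq_Icc, Finset.sum_Ico_eq_sum_range]
    rw [show t + 1 + 1 - 1 = t + 1 from rfl]
    rw [hS]
    push_cast
    rw [Finset.sum_div]
    refine Finset.sum_congr rfl fun i _ => ?_
    rw [hα (1 + i)]
    rw [show 1 + i - 1 = i by omega]
    by_cases hi : i < r
    · rw [if_pos (by omega : 1 + i ≤ r), if_pos hi]
      push_cast
      ring
    · rw [if_neg (by omega : ¬ (1 + i ≤ r)), if_neg hi]
      push_cast [ht, hrdef]
      ring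
  have hB : ∑ k ∈ Icc 1 (t+1), (t.choose (k-1) : ℝ) / (t.factorial : ℝ)
      = (2:ℝ)^t / (t.factorial : ℝ) := by
    rw [← Finset.Ico_add_one_right_eq_Icc, Finset.sum_Ico_eq_sum_range]
    rw [show t + 1 + 1 - 1 = t + 1 from rfl]
    have : ∑ i ∈ range (t+1), (t.choose (1 + i - 1) : ℝ) / (t.factorial : ℝ)
        = ∑ i ∈ range (t+1), (t.choose i : ℝ) / (t.factorial : ℝ) := by
      refine Finset.sum_congr rfl fun i _ => by rw [show 1 + i - 1 = i by omega]
    rw [this, ← Finset.sum_div]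
    congr 1
    rw [← Nat.cast_sum]
    rw [Nat.sum_range_choose]
    push_cast
    rfl
  rw [hA] at hnum
  rw [hB] at hden
  have htfac : (t.factorial : ℝ) ≠ 0 := by positivity
  have ht2 : (2:ℝ)^t ≠ 0 := by positivity
  have htpos : (0:ℝ) < (t:ℝ) := by
    rw [ht, hrdef]; push_cast; positivity
  have hne : (t : ℝ) * ((2:ℝ)^t / (t.factorial : ℝ)) ≠ 0 := by positivity
  have hmain := hnum.div (tendsto_const_nhds.mul hden) hne
  -- key identity
  have hkeyR : 2 * (S : ℝ) + (t : ℝ) * (t.choose r : ℝ) = 2 * (t : ℝ) * 2 ^ t := by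
    have hk := keyNat s
    rw [show 2*s+3 = t+1 by rw [ht, hrdef]; ring] at hk
    rw [show 2*(s+1) = t by rw [ht, hrdef]] at hk
    rw [show s+1 = r from rfl] at hk
    rw [← hS] at hk
    exact_mod_cast hk
  have hlim : (S : ℝ) / (t.factorial : ℝ) / ((t : ℝ) * ((2:ℝ)^t / (t.factorial : ℝ)))
      = 1 - (1 / 2) * (t.choose r : ℝ) / 2 ^ t := by
    rw [show (t : ℝ) * ((2:ℝ)^t / (t.factorial : ℝ)) = ((t : ℝ) * (2:ℝ)^t) / (t.factorial : ℝ)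
      from (mul_div_assoc _ _ _).symm]
    rw [div_div_cancel_aux _ _ _ htfac]
    have hne2 : (t : ℝ) * (2:ℝ)^t ≠ 0 := by positivity
    field_simp
    linear_combination hkeyR
  rw [hlim] at hmain
  refine hmain.congr' ?_
  filter_upwards [eventually_gt_atTop 0] with q hq
  have hq0 : (q:ℝ)^t ≠ 0 := by
    apply pow_ne_zero; exact Nat.cast_ne_zero.mpr (by omega)
  have e1 : ∑ k ∈ Icc 1 (t+1),
      (α k : ℝ) * ((((q+1).choose (k-1) * q.choose (t+1-k) : ℕ)) : ℝ) / (q:ℝ)^t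
      = (∑ k ∈ Icc 1 (t+1),
      (α k : ℝ) * ((((q+1).choose (k-1) * q.choose (t+1-k) : ℕ)) : ℝ)) / (q:ℝ)^t := by
    rw [Finset.sum_div]
  have e2 : (t:ℝ) * ∑ k ∈ Icc 1 (t+1),
      ((((q+1).choose (k-1) * q.choose (t+1-k) : ℕ)) : ℝ) / (q:ℝ)^t
      = ((t:ℝ) * ∑ k ∈ Icc 1 (t+1),
      ((((q+1).choose (k-1) * q.choose (t+1-k) : ℕ)) : ℝ)) / (q:ℝ)^t := by
    rw [mul_div_assoc, Finset.sum_div]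
  simp only [Pi.div_apply]
  rw [e1, e2, div_div_cancel_aux _ _ _ hq0]
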